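/- Let L > 0, 0 < λ < 1, let p = 1/δ and q = 1/(1−δ) for some δ ∈ (0, 1−λ), and let g : [0, L] → ℝ be absolutely continuous with g(0) = 0 and g′ ∈ L^p(0, L). Then ∫₀^L |g(r)| r^{−λ−1} dr ≤ C ‖g′‖_{L^p(0,L)} for a constant C depending only on L, λ, p. In particular the integral is finite. -/

import Mathlib

open Real Set MeasureTheory

/-- Hardy-inequality estimate: for `0 < λ < 1`, `p = 1/δ`, `q = 1/(1−δ)` with
`δ ∈ (0, 1−λ)`, there is a constant `C` (depending only on `L, λ, p`) such that every
absolutely continuous `g` on `[0,L]` with `g(0) = 0` and `g' ∈ L^p(0,L)` satisfies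
`∫₀^L |g(r)| r^{−λ−1} dr ≤ C ‖g'‖_{L^p(0,L)}`. -/
theorem hardy_boundary_estimate (L lam δ p q : ℝ) (hL : 0 < L)
    (hlam : 0 < lam) (hlam1 : lam < 1) (hδ : δ ∈ Ioo (0 : ℝ) (1 - lam))
    (hp : p = 1 / δ) (hq : q = 1 / (1 - δ)) :
    ∃ C : ℝ, 0 < C ∧
      ∀ g g' : ℝ → ℝ,
        IntervalIntegrable g' volume 0 L →
        (∀ x ∈ Icc (0 : ℝ) L, g x = ∫ r in (0 : ℝ)..x, g' r) →
        IntegrableOn (fun r => |g' r| ^ p) (Ioc (0 : ℝ) L) volume →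
        (∫ r in Ioc (0 : ℝ) L, |g r| * r ^ (-lam - 1)) ≤
          C * (∫ r in Ioc (0 : ℝ) L, |g' r| ^ p) ^ (1 / p) := by
  obtain ⟨hδ0, hδ1⟩ := hδ
  have hδlt1 : δ < 1 := by linarith
  have hepos : 0 < 1 - δ - lam := by linarith
  set e : ℝ := -δ - lam with he_def
  have he1 : -1 < e := by rw [he_def]; linarith
  have hppos : 0 < p := by rw [hp]; positivity
  have hpq : p.HolderConjugate q := by
    rw [Real.holderConjugate_iff]
    constructor
    · rw [hp]; rw [lt_div_iff₀ hδ0]; linarith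
    · rw [hp, hq]; field_simp; ring
  refine ⟨L ^ (1 - δ - lam) / (1 - δ - lam), by positivity, ?_⟩
  intro g g' hint hg hpint
  set A : ℝ := (∫ r in Ioc (0 : ℝ) L, |g' r| ^ p) ^ (1 / p) with hA
  have hA0 : 0 ≤ A :=
    Real.rpow_nonneg (integral_nonneg fun r => Real.rpow_nonneg (abs_nonneg _) _) _
  set G : ℝ → ℝ := fun x => ∫ t in (0 : ℝ)..x, g' t with hG
  have hGc : ContinuousOn G (Icc 0 L) := by
    have := intervalIntegral.continuousOn_primitive_interval' hint
      Set.left_mem_uIcc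
    rwa [Set.uIcc_of_le hL.le] at this
  have hg'i : IntegrableOn g' (Ioc (0:ℝ) L) :=
    (intervalIntegrable_iff_integrableOn_Ioc_of_le hL.le).mp hint
  -- the key pointwise bound
  have key : ∀ r ∈ Ioc (0:ℝ) L, |G r| * r ^ (-lam - 1) ≤ A * r ^ e := by
    intro r hr
    obtain ⟨hr0, hrL⟩ := hr
    have h1 : |G r| ≤ ∫ t in Ioc (0:ℝ) r, |g' t| := by
      calc |G r| ≤ ∫ t in (0:ℝ)..r, |g' t| :=
            intervalIntegral.abs_integral_le_integral_abs hr0.le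
        _ = ∫ t in Ioc (0:ℝ) r, |g' t| := intervalIntegral.integral_of_le hr0.le
    have hsm : AEStronglyMeasurable g' (volume.restrict (Ioc (0:ℝ) r)) :=
      hg'i.aestronglyMeasurable.mono_measure
        (Measure.restrict_mono (Ioc_subset_Ioc_right hrL) le_rfl)
    have hfin : IsFiniteMeasure (volume.restrict (Ioc (0:ℝ) r)) :=
      ⟨by rw [Measure.restrict_apply_univ]; exact measure_Ioc_lt_top⟩
    have hponer : (ENNReal.ofReal p) ≠ 0 := by
      simp [ENNReal.ofReal_eq_zero, not_le, hppos]
    have hfmem : MemLp (fun x => |g' x|) (ENNReal.ofReal p)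
        (volume.restrict (Ioc (0:ℝ) r)) := by
      have h2 : MemLp (fun x : ℝ => ‖g' x‖ ^ (ENNReal.ofReal p).toReal)
          (ENNReal.ofReal p / ENNReal.ofReal p) (volume.restrict (Ioc (0:ℝ) r)) := by
        rw [ENNReal.div_self hponer ENNReal.ofReal_ne_top, memLp_one_iff_integrable]
        have : IntegrableOn (fun x => |g' x| ^ p) (Ioc (0:ℝ) r) :=
          hpint.mono_set (Ioc_subset_Ioc_right hrL)
        simpa [Real.norm_eq_abs, ENNReal.toReal_ofReal hppos.le] using this.integrable
      have h3 := (memLp_norm_rpow_iff hsm hponer ENNReal.ofReal_ne_top).mp h2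
      simpa [Real.norm_eq_abs] using h3.norm
    have hgmem : MemLp (fun _ : ℝ => (1:ℝ)) (ENNReal.ofReal q)
        (volume.restrict (Ioc (0:ℝ) r)) := memLp_const _
    have hold := integral_mul_le_Lp_mul_Lq_of_nonneg hpq
      (ae_of_all _ fun x => abs_nonneg (g' x)) (ae_of_all _ fun _ => zero_le_one) hfmem hgmem
    simp only [mul_one, Real.one_rpow] at hold
    have hvol : (∫ _ in Ioc (0:ℝ) r, (1:ℝ)) = r := by
      simp [Real.volume_Ioc, ENNReal.toReal_ofReal hr0.le, hr0.le]
    rw [hvol] at hold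
    have hsub : (∫ t in Ioc (0:ℝ) r, |g' t| ^ p) ≤ ∫ t in Ioc (0:ℝ) L, |g' t| ^ p := by
      apply setIntegral_mono_set hpint
      · exact ae_of_all _ fun t => Real.rpow_nonneg (abs_nonneg _) _
      · exact HasSubset.Subset.eventuallyLE (Ioc_subset_Ioc_right hrL)
    have h4 : (∫ t in Ioc (0:ℝ) r, |g' t| ^ p) ^ (1/p) ≤ A :=
      Real.rpow_le_rpow (integral_nonneg fun t => Real.rpow_nonneg (abs_nonneg _) _)
        hsub (by positivity)
    have h5 : |G r| ≤ A * r ^ (1/q) := by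
      refine h1.trans (hold.trans ?_)
      exact mul_le_mul_of_nonneg_right h4 (Real.rpow_nonneg hr0.le _)
    have h6 : |G r| * r ^ (-lam - 1) ≤ A * r ^ (1/q) * r ^ (-lam - 1) :=
      mul_le_mul_of_nonneg_right h5 (Real.rpow_nonneg hr0.le _)
    refine h6.trans_eq ?_
    rw [mul_assoc, ← Real.rpow_add hr0]
    congr 1
    rw [hq, he_def]
    field_simp
    ring
  -- integrability of the bound
  have hBint : IntegrableOn (fun r : ℝ => A * r ^ e) (Ioc (0:ℝ) L) := by
    have h := intervalIntegral.intervalIntegrable_rpow' (r := e) (a := 0) (b := L) he1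
    exact ((intervalIntegrable_iff_integrableOn_Ioc_of_le hL.le).mp h).const_mul A
  have hGm : AEStronglyMeasurable (fun r => |G r| * r ^ (-lam - 1))
      (volume.restrict (Ioc (0:ℝ) L)) := by
    refine ContinuousOn.aestronglyMeasurable ?_ measurableSet_Ioc
    refine ContinuousOn.mul (hGc.mono Ioc_subset_Icc_self).abs ?_
    intro x hx
    exact (Real.continuousAt_rpow_const x _ (Or.inl (ne_of_gt hx.1))).continuousWithinAt
  have hfint : IntegrableOn (fun r => |G r| * r ^ (-lam - 1)) (Ioc (0:ℝ) L) := by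
    refine hBint.mono' hGm ?_
    refine (ae_restrict_iff' measurableSet_Ioc).2 (ae_of_all _ fun r hr => ?_)
    rw [Real.norm_eq_abs,
      abs_of_nonneg (mul_nonneg (abs_nonneg _) (Real.rpow_nonneg hr.1.le _))]
    exact key r hr
  calc (∫ r in Ioc (0 : ℝ) L, |g r| * r ^ (-lam - 1))
      = ∫ r in Ioc (0 : ℝ) L, |G r| * r ^ (-lam - 1) := by
        refine setIntegral_congr_fun measurableSet_Ioc fun r hr => ?_
        rw [hg r (Ioc_subset_Icc_self hr)]
    _ ≤ ∫ r in Ioc (0 : ℝ) L, A * r ^ e :=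
        setIntegral_mono_on hfint hBint measurableSet_Ioc key
    _ = A * ∫ r in Ioc (0 : ℝ) L, r ^ e := by
        rw [integral_const_mul]
    _ = A * (L ^ (1 - δ - lam) / (1 - δ - lam)) := by
        have hee : e + 1 = 1 - δ - lam := by rw [he_def]; ring
        rw [← intervalIntegral.integral_of_le hL.le, integral_rpow (Or.inl he1),
          Real.zero_rpow (by rw [hee]; linarith), sub_zero, hee]
    _ = L ^ (1 - δ - lam) / (1 - δ - lam) * A := mul_comm _ _
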